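/- Let X be a real Banach space with a 1-unconditional basis {e_i} satisfying property (P): ‖e_i + ε e_j‖ > 1 for all i ≠ j and ε > 0, and property (Q): lim_{ε→0} (‖e_i + ε e_j‖ − 1)/ε = 0 for all i ≠ j. Suppose Y = ∩_{j=1}^n ker f_j is a subspace of codimension n with f_j(e_k) = δ_{jk} for j, k ≤ n, and P = Id − Σ_{j=1}^n f_j ⊗ u_j is a projection onto Y (f_j(u_k) = δ_{jk}) with ‖P‖ = 1. Then ∪_{j=1}^n supp u_j = ∪_{j=1}^n supp f_j. -/

import Mathlib

open Filter

/-- Support lemma: if `X` has a 1-unconditional basis with properties (P) and (Q),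
and `P = Id − Σ fⱼ ⊗ uⱼ` is a norm-one projection, then
`⋃ supp uⱼ = ⋃ supp fⱼ`. -/
theorem stmt8 {X : Type*} [NormedAddCommGroup X] [NormedSpace ℝ X] [CompleteSpace X]
    {ι : Type*} [DecidableEq ι] (e : ι → X) (coord : ι → X →L[ℝ] ℝ)
    (hbior : ∀ i j, coord i (e j) = if i = j then 1 else 0)
    (hnorme : ∀ i, ‖e i‖ = 1)
    (hsep : ∀ x : X, (∀ i, coord i x = 0) → x = 0)
    (huncond : ∀ σ : ι → ℝ, (∀ i, σ i = 1 ∨ σ i = -1) →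
      ∃ D : X ≃ₗᵢ[ℝ] X, ∀ (x : X) (i : ι), coord i (D x) = σ i * coord i x)
    (hPprop : ∀ i j : ι, i ≠ j → ∀ ε : ℝ, 0 < ε → 1 < ‖e i + ε • e j‖)
    (hQprop : ∀ i j : ι, i ≠ j →
      Tendsto (fun ε : ℝ => (‖e i + ε • e j‖ - 1) / ε) (nhdsWithin 0 {(0:ℝ)}ᶜ) (nhds 0))
    (n : ℕ) (f : Fin n → X →L[ℝ] ℝ) (u : Fin n → X)
    (κ : Fin n → ι) (hκ : Function.Injective κ)
    (hfe : ∀ j k : Fin n, f j (e (κ k)) = if j = k then 1 else 0)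
    (hfu : ∀ j k : Fin n, f j (u k) = if j = k then 1 else 0)
    (hnorm : ‖ContinuousLinearMap.id ℝ X - ∑ j, (f j).smulRight (u j)‖ = 1) :
    (⋃ j, {i : ι | coord i (u j) ≠ 0}) = (⋃ j, {i : ι | f j (e i) ≠ 0}) := by
  classical
  set P : X →L[ℝ] X := ContinuousLinearMap.id ℝ X - ∑ j, (f j).smulRight (u j) with hPdef
  have hPapply : ∀ x : X, P x = x - ∑ j, f j x • u j := by
    intro x
    simp [hPdef, ContinuousLinearMap.sub_apply, ContinuousLinearMap.sum_apply]
  have hPnorm : ∀ x : X, ‖P x‖ ≤ ‖x‖ := by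
    intro x
    calc ‖P x‖ ≤ ‖P‖ * ‖x‖ := P.le_opNorm x
      _ = ‖x‖ := by rw [hnorm, one_mul]
  -- equality criterion via separation
  have heq : ∀ x y : X, (∀ i, coord i x = coord i y) → x = y := by
    intro x y h
    have h0 : x - y = 0 := hsep (x - y) (fun i => by simp [map_sub, h i])
    exact sub_eq_zero.mp h0
  -- |coord i x| ≤ ‖x‖
  have hcoord_le : ∀ (i : ι) (x : X), |coord i x| ≤ ‖x‖ := by
    intro i x
    obtain ⟨D, hD⟩ := huncond (fun k => if k = i then -1 else 1)
      (fun k => by by_cases hk : k = i <;> simp [hk])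
    have h1 : x - D x = (2 * coord i x) • e i := by
      apply heq
      intro k
      by_cases hk : k = i <;> simp [map_sub, hD, map_smul, hbior, hk] <;> ring
    have h2 : ‖x - D x‖ ≤ 2 * ‖x‖ := by
      have hn : ‖D x‖ = ‖x‖ := D.norm_map x
      calc ‖x - D x‖ ≤ ‖x‖ + ‖D x‖ := norm_sub_le _ _
        _ = 2 * ‖x‖ := by rw [hn]; ring
    rw [h1, norm_smul, hnorme, mul_one] at h2
    have : |2 * coord i x| = 2 * |coord i x| := by
      rw [abs_mul]; norm_num
    rw [Real.norm_eq_abs, this] at h2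
    linarith
  -- two coordinate restriction contraction
  have hpair : ∀ (i i' : ι), i ≠ i' → ∀ x : X,
      ‖(coord i x) • e i + (coord i' x) • e i'‖ ≤ ‖x‖ := by
    intro i i' hii x
    obtain ⟨D, hD⟩ := huncond (fun k => if k = i ∨ k = i' then 1 else -1)
      (fun k => by by_cases hk : k = i ∨ k = i' <;> simp [hk])
    have h1 : (coord i x) • e i + (coord i' x) • e i' = ((1:ℝ)/2) • (x + D x) := by
      apply heq
      intro k
      by_cases hki : k = i
      · subst hki
        simp [map_add, map_smul, hD, hbior, hii, Ne.symm hii]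
        ring
      · by_cases hki' : k = i'
        · subst hki'
          simp [map_add, map_smul, hD, hbior, hii.symm, hki] <;> ring
        · simp [map_add, map_smul, hD, hbior, hki, hki', Ne.symm hki, Ne.symm hki'] <;> ring
    rw [h1, norm_smul]
    have hn : ‖D x‖ = ‖x‖ := D.norm_map x
    have : ‖x + D x‖ ≤ 2 * ‖x‖ := by
      calc ‖x + D x‖ ≤ ‖x‖ + ‖D x‖ := norm_add_le _ _
        _ = 2 * ‖x‖ := by rw [hn]; ring
    rw [Real.norm_eq_abs]
    have h12 : |(1:ℝ)/2| = 1/2 := by norm_num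
    rw [h12]
    linarith
  -- sign flip at second coordinate
  have hflip : ∀ (i i' : ι), i ≠ i' → ∀ a : ℝ, ‖e i + a • e i'‖ = ‖e i + |a| • e i'‖ := by
    intro i i' hii a
    rcases le_or_gt 0 a with ha | ha
    · rw [abs_of_nonneg ha]
    · rw [abs_of_neg ha]
      obtain ⟨D, hD⟩ := huncond (fun k => if k = i' then -1 else 1)
        (fun k => by by_cases hk : k = i' <;> simp [hk])
      have h1 : D (e i + a • e i') = e i + (-a) • e i' := by
        apply heq
        intro k
        by_cases hk : k = i'
        · subst hk
          simp [map_add, map_smul, hD, hbior, Ne.symm hii] <;> ring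
        · simp [map_add, map_smul, hD, hbior, hk]
      calc ‖e i + a • e i'‖ = ‖D (e i + a • e i')‖ := (D.norm_map _).symm
        _ = ‖e i + (-a) • e i'‖ := by rw [h1]
  -- main proof
  ext i
  simp only [Set.mem_iUnion, Set.mem_setOf_eq]
  constructor
  · -- supp u ⊆ supp f : uses property (Q)
    rintro ⟨j, hc⟩
    by_contra hall
    push_neg at hall
    set c := coord i (u j) with hcdef
    have hiκ : i ≠ κ j := by
      intro h
      have := hfe j j
      simp at this
      rw [h] at hall
      have h0 := hall j
      rw [this] at h0
      exact one_ne_zero h0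
    have key : ∀ δ : ℝ, 0 < δ → |c| ≤ (‖e i + δ • e (κ j)‖ - 1) / δ := by
      intro δ hδ
      set t : ℝ := -(δ * |c|) / c with htdef
      have hc0 : c ≠ 0 := hc
      have htc : t * c = -(δ * |c|) := by
        rw [htdef, div_mul_cancel₀ _ hc0]
      have hts : |t| = δ := by
        rw [htdef, abs_div, abs_neg, abs_mul, abs_abs, abs_of_pos hδ]
        field_simp [abs_ne_zero.mpr hc0]
      set x : X := e i + t • e (κ j) with hxdef
      have hfx : ∀ k : Fin n, f k x = if k = j then t else 0 := by
        intro k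
        rw [hxdef, map_add, map_smul, hall k, hfe]
        by_cases hk : k = j <;> simp [hk]
      have hPx : P x = e i + t • e (κ j) - t • u j := by
        rw [hPapply]
        congr 1
        rw [Finset.sum_eq_single j]
        · simp [hfx]
        · intro k _ hk
          simp [hfx, hk]
        · intro h
          exact absurd (Finset.mem_univ j) h
      have hcoordPx : coord i (P x) = 1 - t * c := by
        rw [hPx]
        simp [map_add, map_sub, map_smul, hbior, hiκ, ← hcdef] <;> ring
      have h1 : |1 - t * c| ≤ ‖P x‖ := by
        rw [← hcoordPx]; exact hcoord_le i (P x)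
      have h2 : ‖P x‖ ≤ ‖x‖ := hPnorm x
      have h3 : ‖x‖ = ‖e i + δ • e (κ j)‖ := by
        rw [hxdef, hflip i (κ j) hiκ t, hts]
      have h4 : |1 - t * c| = 1 + δ * |c| := by
        rw [htc]
        have : (0:ℝ) ≤ δ * |c| := le_of_lt (mul_pos hδ (abs_pos.mpr hc0))
        rw [sub_neg_eq_add, abs_of_pos (by linarith)]
      have h5 : 1 + δ * |c| ≤ ‖e i + δ • e (κ j)‖ := by
        rw [← h4, ← h3]
        exact le_trans h1 h2
      rw [le_div_iff₀ hδ]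
      linarith
    -- contradict property (Q)
    have hQ := hQprop i (κ j) hiκ
    have hQ' : Tendsto (fun ε : ℝ => (‖e i + ε • e (κ j)‖ - 1) / ε)
        (nhdsWithin 0 (Set.Ioi 0)) (nhds 0) :=
      hQ.mono_left (nhdsWithin_mono 0 (fun x hx => ne_of_gt hx))
    have hev : ∀ᶠ δ in nhdsWithin (0:ℝ) (Set.Ioi 0),
        |c| ≤ (‖e i + δ • e (κ j)‖ - 1) / δ :=
      eventually_nhdsWithin_of_forall (fun δ hδ => key δ hδ)
    have : |c| ≤ 0 := ge_of_tendsto hQ' hev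
    have : (0:ℝ) < |c| := abs_pos.mpr hc
    linarith
  · -- supp f ⊆ supp u : uses property (P)
    rintro ⟨j, hfj⟩
    by_contra hall
    push_neg at hall
    set w : X := ∑ k, f k (e i) • u k with hwdef
    have hfw : f j w = f j (e i) := by
      rw [hwdef, map_sum, Finset.sum_eq_single j]
      · simp [map_smul, hfu]
      · intro k _ hk
        simp [map_smul, hfu]
        intro h
        exact absurd h.symm hk
      · intro h
        exact absurd (Finset.mem_univ j) h
    have hw0 : w ≠ 0 := by
      intro h
      rw [h, map_zero] at hfw
      exact hfj hfw.symm
    have hcoordiw : coord i w = 0 := by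
      rw [hwdef, map_sum]
      apply Finset.sum_eq_zero
      intro k _
      simp [map_smul, hall k]
    obtain ⟨i', hi'⟩ : ∃ i', coord i' w ≠ 0 := by
      by_contra h
      push_neg at h
      exact hw0 (hsep w h)
    have hii' : i ≠ i' := by
      intro h
      rw [← h] at hi'
      exact hi' hcoordiw
    set a := coord i' w with hadef
    have hPei : P (e i) = e i - w := by rw [hPapply]
    have hcv1 : coord i (P (e i)) = 1 := by
      rw [hPei, map_sub, hcoordiw, hbior]
      simp
    have hcv2 : coord i' (P (e i)) = -a := by
      rw [hPei, map_sub, hbior, ← hadef]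
      simp [Ne.symm hii']
    have h1 : ‖e i + (-a) • e i'‖ ≤ ‖P (e i)‖ := by
      have := hpair i i' hii' (P (e i))
      rwa [hcv1, hcv2, one_smul] at this
    have h2 : ‖P (e i)‖ ≤ 1 := by
      have := hPnorm (e i)
      rwa [hnorme] at this
    have h3 : ‖e i + (-a) • e i'‖ = ‖e i + |a| • e i'‖ := by
      rw [hflip i i' hii' (-a), abs_neg]
    have h4 : 1 < ‖e i + |a| • e i'‖ :=
      hPprop i i' hii' |a| (abs_pos.mpr hi')
    rw [h3] at h1
    linarith
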